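/- Let p be an odd prime and consider the polynomial a = z·y² − x·(x−z)·(x−t·z) in the polynomial ring 𝔽_p[x, y, z, t] (the defining equation of the family of cones over the cubic curves y²z = x(x−z)(x−tz)). Then there exists a unique polynomial h ∈ 𝔽_p[t] such that a^{p−1} − h·x^{p−1}·y^{p−1}·z^{p−1} lies in the ideal (x^p, y^p, z^p) ⊆ 𝔽_p[x, y, z, t], and this h is nonzero; in particular a^{p−1} ∉ (x^p, y^p, z^p). (By Fedder's criterion this is the paper's assertion that the hypersurface X = {a = 0} is F-pure at the generic point of the section Z = V(x, y, z), and h is the Hasse polynomial appearing in the computation of the F-different in Example 3.2.) -/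

import Mathlib

open MvPolynomial

/-- The defining equation `a = z y² − x (x − z)(x − t z)` of the family of cones over
the cubic curves `y² z = x (x − z)(x − t z)`, in `𝔽_p[x, y, z, t]`, with the
variables `x, y, z, t` being `X 0, X 1, X 2, X 3`. -/
noncomputable def stmt8poly (p : ℕ) : MvPolynomial (Fin 4) (ZMod p) :=
  X 2 * X 1 ^ 2 - X 0 * (X 0 - X 2) * (X 0 - X 3 * X 2)

/-- The ideal `(x^p, y^p, z^p) ⊆ 𝔽_p[x, y, z, t]`. -/
noncomputable def stmt8ideal (p : ℕ) : Ideal (MvPolynomial (Fin 4) (ZMod p)) :=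
  Ideal.span {X 0 ^ p, X 1 ^ p, X 2 ^ p}

variable {p : ℕ}

-- exponent vector (a,b,c,e)
noncomputable def s8e (a b c e : ℕ) : Fin 4 →₀ ℕ :=
  Finsupp.single 0 a + Finsupp.single 1 b + Finsupp.single 2 c + Finsupp.single 3 e


lemma s8e_apply (a b c e : ℕ) :
    s8e a b c e 0 = a ∧ s8e a b c e 1 = b ∧ s8e a b c e 2 = c ∧ s8e a b c e 3 = e := by
  refine ⟨?_, ?_, ?_, ?_⟩ <;> simp [s8e, Finsupp.single_apply]

lemma s8e_eq_iff (d : Fin 4 →₀ ℕ) (a b c e : ℕ) :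
    s8e a b c e = d ↔ d 0 = a ∧ d 1 = b ∧ d 2 = c ∧ d 3 = e := by
  obtain ⟨h0, h1, h2, h3⟩ := s8e_apply a b c e
  constructor
  · rintro rfl; exact ⟨h0, h1, h2, h3⟩
  · rintro ⟨g0, g1, g2, g3⟩
    ext j
    fin_cases j
    · exact h0.trans g0.symm
    · exact h1.trans g1.symm
    · exact h2.trans g2.symm
    · exact h3.trans g3.symm

lemma s8_mon (a b c : ℕ) :
    (X 0 ^ a * X 1 ^ b * X 2 ^ c : MvPolynomial (Fin 4) (ZMod p)) = monomial (s8e a b c 0) 1 := by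
  rw [s8e]
  simp [X_pow_eq_monomial, monomial_mul]

lemma s8_coeff_term (r : ZMod p) (a b c : ℕ) (d : Fin 4 →₀ ℕ) :
    coeff d (C r * (X 0 ^ a * X 1 ^ b * X 2 ^ c) : MvPolynomial (Fin 4) (ZMod p)) =
      if d 0 = a ∧ d 1 = b ∧ d 2 = c ∧ d 3 = 0 then r else 0 := by
  rw [s8_mon, coeff_C_mul, coeff_monomial]
  simp only [s8e_eq_iff]
  split_ifs <;> simp

-- ideal coefficient vanishing
lemma s8_coeff_eq_zero_of_mem {f : MvPolynomial (Fin 4) (ZMod p)} (hf : f ∈ stmt8ideal p)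
    (d : Fin 4 →₀ ℕ) (h0 : d 0 < p) (h1 : d 1 < p) (h2 : d 2 < p) : coeff d f = 0 := by
  let J : Ideal (MvPolynomial (Fin 4) (ZMod p)) :=
  { carrier := {g | ∀ d : Fin 4 →₀ ℕ, d 0 < p → d 1 < p → d 2 < p → coeff d g = 0}
    add_mem' := fun ha hb d h0 h1 h2 => by
      rw [coeff_add, ha d h0 h1 h2, hb d h0 h1 h2, add_zero]
    zero_mem' := fun d _ _ _ => by rw [coeff_zero]
    smul_mem' := by
      intro g f hf d h0 h1 h2
      rw [smul_eq_mul, coeff_mul]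
      apply Finset.sum_eq_zero
      rintro ⟨u, v⟩ huv
      rw [Finset.HasAntidiagonal.mem_antidiagonal] at huv
      have hv : ∀ i, v i ≤ d i := fun i => by
        rw [← huv]; simp
      rw [hf v (lt_of_le_of_lt (hv 0) h0) (lt_of_le_of_lt (hv 1) h1)
        (lt_of_le_of_lt (hv 2) h2), mul_zero] }
  have hJ : stmt8ideal p ≤ J := by
    rw [stmt8ideal, Ideal.span_le]
    rintro g (rfl | rfl | rfl) <;> intro d h0 h1 h2 <;> rw [coeff_X_pow, if_neg] <;>
        intro h <;> subst h
    · simp [Finsupp.single_eq_same] at h0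
    · simp [Finsupp.single_eq_same] at h1
    · simp [Finsupp.single_eq_same] at h2
  exact hJ hf d h0 h1 h2

lemma s8_monomial_mem (d : Fin 4 →₀ ℕ) (c : ZMod p) (i : Fin 4)
    (hi : X i ^ p ∈ stmt8ideal p) (h : p ≤ d i) : monomial d c ∈ stmt8ideal p := by
  have hle : Finsupp.single i p ≤ d := Finsupp.single_le_iff.mpr h
  have heq : monomial d c = monomial (d - Finsupp.single i p) c * X i ^ p := by
    rw [X_pow_eq_monomial, monomial_mul, mul_one, tsub_add_cancel_of_le hle]
  rw [heq]
  exact Ideal.mul_mem_left _ _ hi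

lemma s8_mem_of_support (f : MvPolynomial (Fin 4) (ZMod p))
    (hf : ∀ d ∈ f.support, p ≤ d 0 ∨ p ≤ d 1 ∨ p ≤ d 2) : f ∈ stmt8ideal p := by
  rw [f.as_sum]
  apply Ideal.sum_mem
  intro d hd
  have hx : (X 0 : MvPolynomial (Fin 4) (ZMod p)) ^ p ∈ stmt8ideal p :=
    Ideal.subset_span (by simp)
  have hy : (X 1 : MvPolynomial (Fin 4) (ZMod p)) ^ p ∈ stmt8ideal p :=
    Ideal.subset_span (by simp)
  have hz : (X 2 : MvPolynomial (Fin 4) (ZMod p)) ^ p ∈ stmt8ideal p :=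
    Ideal.subset_span (by simp)
  rcases hf d hd with h | h | h
  · exact s8_monomial_mem d _ 0 hx h
  · exact s8_monomial_mem d _ 1 hy h
  · exact s8_monomial_mem d _ 2 hz h

-- weighted homogeneity

lemma s8_iwh_sub {φ ψ : MvPolynomial (Fin 4) (ZMod p)} {w : Fin 4 → ℕ} {n : ℕ}
    (hφ : φ.IsWeightedHomogeneous w n) (hψ : ψ.IsWeightedHomogeneous w n) :
    (φ - ψ).IsWeightedHomogeneous w n := by
  intro d hd
  rw [coeff_sub] at hd
  by_cases h : coeff d φ = 0
  · exact hψ (by rw [h, zero_sub, neg_ne_zero] at hd; exact hd)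
  · exact hφ h

lemma s8_iwh_pow {φ : MvPolynomial (Fin 4) (ZMod p)} {w : Fin 4 → ℕ} {n : ℕ}
    (hφ : φ.IsWeightedHomogeneous w n) (k : ℕ) :
    (φ ^ k).IsWeightedHomogeneous w (k * n) := by
  induction k with
  | zero => simpa using isWeightedHomogeneous_one (ZMod p) w
  | succ k ih =>
      have := ih.mul hφ
      rw [pow_succ]
      convert this using 1
      ring

lemma s8_weight (d : Fin 4 →₀ ℕ) :
    Finsupp.weight (![1,1,1,0] : Fin 4 → ℕ) d = d 0 + d 1 + d 2 := by
  rw [Finsupp.weight_apply, Finsupp.sum_fintype]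
  · rw [Fin.sum_univ_four]
    simp [Matrix.cons_val_zero, Matrix.cons_val_one]
  · intro i; simp

lemma s8_hom : (stmt8poly p).IsWeightedHomogeneous ![1,1,1,0] 3 := by
  have h0 : (X 0 : MvPolynomial (Fin 4) (ZMod p)).IsWeightedHomogeneous ![1,1,1,0] 1 := by
    simpa using isWeightedHomogeneous_X (ZMod p) ![1,1,1,0] 0
  have h1 : (X 1 : MvPolynomial (Fin 4) (ZMod p)).IsWeightedHomogeneous ![1,1,1,0] 1 := by
    simpa using isWeightedHomogeneous_X (ZMod p) ![1,1,1,0] 1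
  have h2 : (X 2 : MvPolynomial (Fin 4) (ZMod p)).IsWeightedHomogeneous ![1,1,1,0] 1 := by
    simpa using isWeightedHomogeneous_X (ZMod p) ![1,1,1,0] 2
  have h3 : (X 3 : MvPolynomial (Fin 4) (ZMod p)).IsWeightedHomogeneous ![1,1,1,0] 0 := by
    simpa using isWeightedHomogeneous_X (ZMod p) ![1,1,1,0] 3
  rw [stmt8poly]
  have ha : (X 2 * X 1 ^ 2 : MvPolynomial (Fin 4) (ZMod p)).IsWeightedHomogeneous ![1,1,1,0] 3 := by
    have := h2.mul (s8_iwh_pow h1 2)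
    convert this using 1
  have hb : ((X 0 - X 2 : MvPolynomial (Fin 4) (ZMod p))).IsWeightedHomogeneous ![1,1,1,0] 1 :=
    s8_iwh_sub h0 h2
  have hc : ((X 0 - X 3 * X 2 : MvPolynomial (Fin 4) (ZMod p))).IsWeightedHomogeneous ![1,1,1,0] 1 := by
    refine s8_iwh_sub h0 ?_
    have := h3.mul h2
    convert this using 1
  exact s8_iwh_sub ha ((h0.mul hb).mul hc)

lemma s8_support_pow (k : ℕ) (d : Fin 4 →₀ ℕ)
    (hd : coeff d (stmt8poly p ^ k) ≠ 0) : d 0 + d 1 + d 2 = k * 3 := by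
  have := s8_iwh_pow s8_hom k hd
  rwa [s8_weight] at this

-- coefficients of aeval X3 h
lemma s8_coeff_aeval (h : Polynomial (ZMod p)) (u : Fin 4 →₀ ℕ) :
    coeff u (Polynomial.aeval (X 3 : MvPolynomial (Fin 4) (ZMod p)) h) =
      if u = Finsupp.single 3 (u 3) then h.coeff (u 3) else 0 := by
  rw [Polynomial.aeval_def, Polynomial.eval₂_eq_sum, Polynomial.sum_def, coeff_sum]
  have key : ∀ i : ℕ,
      coeff u (algebraMap (ZMod p) (MvPolynomial (Fin 4) (ZMod p)) (h.coeff i) * X 3 ^ i) =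
        h.coeff i * if Finsupp.single 3 i = u then 1 else 0 := by
    intro i
    rw [MvPolynomial.algebraMap_eq, coeff_C_mul, coeff_X_pow]
  simp_rw [key]
  split_ifs with hu
  · have hcond : ∀ i : ℕ, (Finsupp.single 3 i = u) ↔ i = u 3 := by
      intro i
      constructor
      · rintro rfl; rw [Finsupp.single_eq_same]
      · rintro rfl; exact hu.symm
    have : ∀ i ∈ h.support, (h.coeff i * if Finsupp.single 3 i = u then 1 else 0) =
        if i = u 3 then h.coeff i else 0 := by
      intro i _
      simp_rw [hcond i]
      split_ifs <;> simp
    rw [Finset.sum_congr rfl this, Finset.sum_ite_eq' h.support (u 3) h.coeff]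
    split_ifs with hmem
    · rfl
    · rw [Polynomial.notMem_support_iff] at hmem
      rw [hmem]
  · apply Finset.sum_eq_zero
    intro i _
    rw [if_neg, mul_zero]
    rintro rfl
    exact hu (by rw [Finsupp.single_eq_same])

lemma s8_le_iff (d : Fin 4 →₀ ℕ) :
    s8e (p-1) (p-1) (p-1) 0 ≤ d ↔ p - 1 ≤ d 0 ∧ p - 1 ≤ d 1 ∧ p - 1 ≤ d 2 := by
  obtain ⟨e0, e1, e2, e3⟩ := s8e_apply (p-1) (p-1) (p-1) (0:ℕ)
  rw [Finsupp.le_def]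
  constructor
  · intro hh
    refine ⟨?_, ?_, ?_⟩
    · have := hh 0; rwa [e0] at this
    · have := hh 1; rwa [e1] at this
    · have := hh 2; rwa [e2] at this
  · rintro ⟨g0, g1, g2⟩ i
    fin_cases i
    · exact e0.le.trans g0
    · exact e1.le.trans g1
    · exact e2.le.trans g2
    · exact e3.le.trans (Nat.zero_le _)

lemma s8_coeff_aeval_mul (h : Polynomial (ZMod p)) (d : Fin 4 →₀ ℕ) :
    coeff d (Polynomial.aeval (X 3 : MvPolynomial (Fin 4) (ZMod p)) h *
        (X 0 ^ (p-1) * X 1 ^ (p-1) * X 2 ^ (p-1))) =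
      if d 0 = p - 1 ∧ d 1 = p - 1 ∧ d 2 = p - 1 then h.coeff (d 3) else 0 := by
  rw [s8_mon, coeff_mul_monomial']
  obtain ⟨e0, e1, e2, e3⟩ := s8e_apply (p-1) (p-1) (p-1) (0:ℕ)
  by_cases hle : s8e (p-1) (p-1) (p-1) 0 ≤ d
  · rw [if_pos hle, mul_one, s8_coeff_aeval]
    have hsub : ∀ i : Fin 4, (d - s8e (p-1) (p-1) (p-1) 0) i
        = d i - s8e (p-1) (p-1) (p-1) 0 i := fun i => Finsupp.tsub_apply d _ i
    have h3 : (d - s8e (p-1) (p-1) (p-1) 0) 3 = d 3 := by rw [hsub 3, e3]; omega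
    rw [h3]
    obtain ⟨g0, g1, g2⟩ := (s8_le_iff d).mp hle
    by_cases hc : d 0 = p - 1 ∧ d 1 = p - 1 ∧ d 2 = p - 1
    · rw [if_pos hc, if_pos]
      ext j
      fin_cases j
      · exact (hsub 0).trans (by rw [e0, hc.1]; simp [Finsupp.single_apply])
      · exact (hsub 1).trans (by rw [e1, hc.2.1]; simp [Finsupp.single_apply])
      · exact (hsub 2).trans (by rw [e2, hc.2.2]; simp [Finsupp.single_apply])
      · exact (hsub 3).trans (by rw [e3]; simp [Finsupp.single_eq_same])
    · rw [if_neg hc, if_neg]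
      intro heq
      apply hc
      refine ⟨?_, ?_, ?_⟩
      · have := congrArg (fun f => f 0) heq
        rw [hsub 0, e0] at this
        rw [Finsupp.single_apply] at this
        simp only [if_neg (by decide : ¬ ((3:Fin 4) = 0))] at this
        omega
      · have := congrArg (fun f => f 1) heq
        rw [hsub 1, e1] at this
        rw [Finsupp.single_apply] at this
        simp only [if_neg (by decide : ¬ ((3:Fin 4) = 1))] at this
        omega
      · have := congrArg (fun f => f 2) heq
        rw [hsub 2, e2] at this
        rw [Finsupp.single_apply] at this
        simp only [if_neg (by decide : ¬ ((3:Fin 4) = 2))] at this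
        omega
  · rw [if_neg hle, if_neg]
    rintro ⟨g0, g1, g2⟩
    exact hle ((s8_le_iff d).mpr ⟨g0.ge, g1.ge, g2.ge⟩)

noncomputable def s8h (p : ℕ) : Polynomial (ZMod p) :=
  ∑ l ∈ Finset.range ((stmt8poly p ^ (p-1)).totalDegree + 1),
    Polynomial.C (coeff (s8e (p-1) (p-1) (p-1) l) (stmt8poly p ^ (p-1))) * Polynomial.X ^ l

lemma s8_coeff_high (l : ℕ) (hl : (stmt8poly p ^ (p-1)).totalDegree < l) :
    coeff (s8e (p-1) (p-1) (p-1) l) (stmt8poly p ^ (p-1)) = 0 := by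
  set d := s8e (p-1) (p-1) (p-1) l with hd
  apply coeff_eq_zero_of_totalDegree_lt
  have h3 : d 3 = l := (s8e_apply (p-1) (p-1) (p-1) l).2.2.2
  have hmem : (3 : Fin 4) ∈ d.support := by
    rw [Finsupp.mem_support_iff, h3]
    omega
  have : d 3 ≤ ∑ i ∈ d.support, d i :=
    Finset.single_le_sum (fun i _ => Nat.zero_le (d i)) hmem
  omega

lemma s8h_coeff (l : ℕ) :
    (s8h p).coeff l = coeff (s8e (p-1) (p-1) (p-1) l) (stmt8poly p ^ (p-1)) := by
  rw [s8h, Polynomial.finset_sum_coeff]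
  simp_rw [Polynomial.coeff_C_mul, Polynomial.coeff_X_pow, mul_ite, mul_one, mul_zero]
  rw [Finset.sum_ite_eq (Finset.range ((stmt8poly p ^ (p-1)).totalDegree + 1)) l
    (fun l => coeff (s8e (p-1) (p-1) (p-1) l) (stmt8poly p ^ (p-1)))]
  split_ifs with hmem
  · rfl
  · rw [Finset.mem_range, not_lt] at hmem
    rw [s8_coeff_high l (by omega)]


/-- The condition that `a^{p−1} − h(t)·x^{p−1} y^{p−1} z^{p−1} ∈ (x^p, y^p, z^p)` for
a polynomial `h ∈ 𝔽_p[t]` (embedded by substituting the variable `t = X 3`). -/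
def stmt8cond (p : ℕ) (h : Polynomial (ZMod p)) : Prop :=
  stmt8poly p ^ (p - 1) -
      Polynomial.aeval (X 3 : MvPolynomial (Fin 4) (ZMod p)) h *
        (X 0 ^ (p - 1) * X 1 ^ (p - 1) * X 2 ^ (p - 1))
    ∈ stmt8ideal p

lemma s8_cond_coeff (hp0 : 0 < p) {h : Polynomial (ZMod p)} (hc : stmt8cond p h) (l : ℕ) :
    h.coeff l = coeff (s8e (p-1) (p-1) (p-1) l) (stmt8poly p ^ (p-1)) := by
  obtain ⟨e0, e1, e2, e3⟩ := s8e_apply (p-1) (p-1) (p-1) l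
  have := s8_coeff_eq_zero_of_mem hc (s8e (p-1) (p-1) (p-1) l)
    (by omega) (by omega) (by omega)
  rw [coeff_sub, s8_coeff_aeval_mul, if_pos ⟨e0, e1, e2⟩, e3, sub_eq_zero] at this
  exact this.symm

lemma s8_cond_unique (hp0 : 0 < p) {h₁ h₂ : Polynomial (ZMod p)}
    (hc1 : stmt8cond p h₁) (hc2 : stmt8cond p h₂) : h₁ = h₂ := by
  ext l
  rw [s8_cond_coeff hp0 hc1 l, s8_cond_coeff hp0 hc2 l]

lemma s8_cond_exists (hp0 : 0 < p) : stmt8cond p (s8h p) := by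
  rw [stmt8cond]
  apply s8_mem_of_support
  intro d hd
  by_contra hcon
  push_neg at hcon
  obtain ⟨h0, h1, h2⟩ := hcon
  rw [MvPolynomial.mem_support_iff] at hd
  apply hd
  rw [coeff_sub, s8_coeff_aeval_mul]
  by_cases hc : d 0 = p - 1 ∧ d 1 = p - 1 ∧ d 2 = p - 1
  · rw [if_pos hc, s8h_coeff]
    have hde : s8e (p-1) (p-1) (p-1) (d 3) = d :=
      (s8e_eq_iff d _ _ _ _).mpr ⟨hc.1, hc.2.1, hc.2.2, rfl⟩
    rw [hde, sub_self]
  · rw [if_neg hc, sub_zero]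
    by_contra hne
    have := s8_support_pow (p-1) d hne
    apply hc
    omega

lemma s8_coeff_mul_X3_pow (f : MvPolynomial (Fin 4) (ZMod p)) (j : ℕ) (hj : j ≠ 0)
    (d : Fin 4 →₀ ℕ) (hd : d 3 = 0) : coeff d (f * X 3 ^ j) = 0 := by
  rw [X_pow_eq_monomial, coeff_mul_monomial', if_neg]
  intro hle
  have := Finsupp.le_def.mp hle 3
  rw [Finsupp.single_eq_same, hd] at this
  omega

lemma s8_coeff_B (n m : ℕ) (hn : n = 2 * m) :
    coeff (s8e n n n 0)
        ((X 2 * (X 1 ^ 2 + X 0 ^ 2) - X 0 ^ 3 : MvPolynomial (Fin 4) (ZMod p)) ^ n)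
      = (n.choose m : ZMod p) := by
  obtain ⟨e0, e1, e2, e3⟩ := s8e_apply n n n 0
  rw [sub_eq_add_neg, add_pow, coeff_sum]
  rw [Finset.sum_eq_single_of_mem n (Finset.self_mem_range_succ n)]
  · -- the k = n term
    have expand : (X 2 * (X 1 ^ 2 + X 0 ^ 2) : MvPolynomial (Fin 4) (ZMod p)) ^ n
          * (-(X 0 ^ 3)) ^ (n - n) * (n.choose n : MvPolynomial (Fin 4) (ZMod p))
        = ∑ i ∈ Finset.range (n + 1),
            C (((-1 : ZMod p) ^ (n - n) * (n.choose i) * (n.choose n)))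
              * (X 0 ^ (2 * (n - i) + 3 * (n - n)) * X 1 ^ (2 * i) * X 2 ^ n) := by
      rw [mul_pow, add_pow, Finset.mul_sum, Finset.sum_mul, Finset.sum_mul]
      refine Finset.sum_congr rfl fun i _ => ?_
      simp only [map_mul, map_pow, map_neg, map_one, map_natCast]
      ring
    rw [expand, coeff_sum]
    rw [Finset.sum_eq_single_of_mem m (by rw [Finset.mem_range]; omega)]
    · rw [s8_coeff_term]
      simp only [e0, e1, e2, e3]
      rw [if_pos ⟨by omega, by omega, trivial, trivial⟩]
      simp [Nat.choose_self]
    · intro i _ hi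
      rw [s8_coeff_term]
      simp only [e0, e1, e2, e3]
      rw [if_neg (by omega)]
  · -- terms k ≠ n vanish
    intro k hk hkn
    rw [Finset.mem_range] at hk
    have expand : (X 2 * (X 1 ^ 2 + X 0 ^ 2) : MvPolynomial (Fin 4) (ZMod p)) ^ k
          * (-(X 0 ^ 3)) ^ (n - k) * (n.choose k : MvPolynomial (Fin 4) (ZMod p))
        = ∑ i ∈ Finset.range (k + 1),
            C (((-1 : ZMod p) ^ (n - k) * (k.choose i) * (n.choose k)))
              * (X 0 ^ (2 * (k - i) + 3 * (n - k)) * X 1 ^ (2 * i) * X 2 ^ k) := by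
      rw [mul_pow, add_pow, Finset.mul_sum, Finset.sum_mul, Finset.sum_mul]
      refine Finset.sum_congr rfl fun i _ => ?_
      simp only [map_mul, map_pow, map_neg, map_one, map_natCast]
      ring
    rw [expand, coeff_sum]
    apply Finset.sum_eq_zero
    intro i _
    rw [s8_coeff_term]
    simp only [e0, e1, e2, e3]
    rw [if_neg (by omega)]

lemma s8_coeff_A (n m : ℕ) (hn : n = 2 * m) :
    coeff (s8e n n n 0) (stmt8poly p ^ n) = (n.choose m : ZMod p) := by
  obtain ⟨e0, e1, e2, e3⟩ := s8e_apply n n n 0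
  have hdecomp : stmt8poly p = (X 2 * (X 1 ^ 2 + X 0 ^ 2) - X 0 ^ 3)
      + X 3 * (X 0 ^ 2 * X 2 - X 0 * X 2 ^ 2) := by
    rw [stmt8poly]; ring
  rw [hdecomp, add_pow, coeff_sum]
  rw [Finset.sum_eq_single_of_mem n (Finset.self_mem_range_succ n)]
  · rw [Nat.sub_self, pow_zero, mul_one, Nat.choose_self, Nat.cast_one, mul_one]
    exact s8_coeff_B n m hn
  · intro k hk hkn
    rw [Finset.mem_range] at hk
    have expand : (X 2 * (X 1 ^ 2 + X 0 ^ 2) - X 0 ^ 3 : MvPolynomial (Fin 4) (ZMod p)) ^ k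
          * (X 3 * (X 0 ^ 2 * X 2 - X 0 * X 2 ^ 2)) ^ (n - k)
          * (n.choose k : MvPolynomial (Fin 4) (ZMod p))
        = ((X 2 * (X 1 ^ 2 + X 0 ^ 2) - X 0 ^ 3) ^ k * (X 0 ^ 2 * X 2 - X 0 * X 2 ^ 2) ^ (n - k)
            * (n.choose k : MvPolynomial (Fin 4) (ZMod p))) * X 3 ^ (n - k) := by
      rw [mul_pow]; ring
    rw [expand]
    exact s8_coeff_mul_X3_pow _ (n - k) (by omega) _ e3

lemma s8_choose_ne (hp : p.Prime) (m : ℕ) (hm : m ≤ p - 1) :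
    ((p - 1).choose m : ZMod p) ≠ 0 := by
  haveI : Fact p.Prime := ⟨hp⟩
  rw [Ne, ZMod.natCast_eq_zero_iff]
  intro hdvd
  have h1 : (p - 1).choose m * m.factorial * (p - 1 - m).factorial = (p - 1).factorial :=
    Nat.choose_mul_factorial_mul_factorial hm
  have h2 : p ∣ (p - 1).factorial := by
    rw [← h1]
    exact (hdvd.mul_right _).mul_right _
  have h3 := (Nat.Prime.dvd_factorial hp).mp h2
  have := hp.two_le
  omega

/-- Fedder's criterion computation in Example 3.2.  Let `p` be an
odd prime and `a = z y² − x (x − z)(x − t z) ∈ 𝔽_p[x, y, z, t]`.  Then there exists a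
unique polynomial `h ∈ 𝔽_p[t]` with
`a^{p−1} − h·x^{p−1} y^{p−1} z^{p−1} ∈ (x^p, y^p, z^p)`, this `h` (the Hasse
polynomial) is nonzero, and in particular `a^{p−1} ∉ (x^p, y^p, z^p)`. -/
theorem stmt_8 (p : ℕ) (hp : p.Prime) (hodd : p ≠ 2) :
    (∃! h : Polynomial (ZMod p), stmt8cond p h) ∧
    (∀ h : Polynomial (ZMod p), stmt8cond p h → h ≠ 0) ∧
    stmt8poly p ^ (p - 1) ∉ stmt8ideal p := by
  have hp0 : 0 < p := hp.pos
  obtain ⟨mm, hmm⟩ := hp.odd_of_ne_two hodd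
  have hn : p - 1 = 2 * mm := by omega
  have hA : coeff (s8e (p-1) (p-1) (p-1) 0) (stmt8poly p ^ (p-1)) = ((p-1).choose mm : ZMod p) :=
    s8_coeff_A (p-1) mm hn
  have hne : ((p-1).choose mm : ZMod p) ≠ 0 := s8_choose_ne hp mm (by omega)
  have hnonzero : ∀ h : Polynomial (ZMod p), stmt8cond p h → h ≠ 0 := by
    intro h hc h0
    have hcc := s8_cond_coeff hp0 hc 0
    rw [h0, Polynomial.coeff_zero, hA] at hcc
    exact hne hcc.symm
  refine ⟨⟨s8h p, s8_cond_exists hp0, fun h hh => s8_cond_unique hp0 hh (s8_cond_exists hp0)⟩,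
    hnonzero, ?_⟩
  intro hmem
  have hc0 : stmt8cond p 0 := by
    rw [stmt8cond]
    simpa using hmem
  exact hnonzero 0 hc0 rfl
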